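/- For every n ≥ 2, the vertex v₁ of the graph Y_{2n+1} is not (2n+1)-malleable: there is a perfect matching M of Y_{2n+1} containing the edges v₀v₁ and v₂v₃ such that no Hamiltonian cycle of Y_{2n+1} extending M contains the edge v₁v₂ or the edge v₁v₃. Hence Y_{2n+1} admits a malleable vertex but not all of its vertices are malleable. -/

import Mathlib

open SimpleGraph

/-- `H` is the edge set of a Hamiltonian cycle of `G`. -/
def IsHamiltonianCycleSet {V : Type} (G : SimpleGraph V) (H : Set (Sym2 V)) : Prop :=
  ∃ (a : V) (c : G.Walk a a), c.IsCycle ∧ (∀ v : V, v ∈ c.support) ∧ H = {e | e ∈ c.edges}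

/-- `M` is the edge set of a perfect matching of `G`: every vertex is incident
to exactly one edge of `M`. -/
def IsPerfectMatchingSet {V : Type} (G : SimpleGraph V) (M : Set (Sym2 V)) : Prop :=
  M ⊆ G.edgeSet ∧ ∀ v : V, ∃! e, e ∈ M ∧ v ∈ e

/-- `F` is the edge set of a 2-factor of `G` (a 2-regular spanning subgraph):
every vertex is incident to exactly two edges of `F`. -/
def IsTwoFactorSet {V : Type} (G : SimpleGraph V) (F : Set (Sym2 V)) : Prop :=
  F ⊆ G.edgeSet ∧ ∀ v : V, {e ∈ F | v ∈ e}.ncard = 2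

/-- `G` is 2-factor Hamiltonian: every 2-factor of `G` is a Hamiltonian cycle. -/
def Is2FH {V : Type} (G : SimpleGraph V) : Prop :=
  ∀ F, IsTwoFactorSet G F → IsHamiltonianCycleSet G F

/-- `G` has the Perfect-Matching-Hamiltonian property: every perfect matching `M`
can be completed, by a perfect matching `N`, to the edge set of a Hamiltonian cycle. -/
def IsPMH {V : Type} (G : SimpleGraph V) : Prop :=
  ∀ M, IsPerfectMatchingSet G M →
    ∃ N, IsPerfectMatchingSet G N ∧ IsHamiltonianCycleSet G (M ∪ N)

/-- `v` is a `t`-malleable vertex of `G`: `v` has degree `t ≥ 2` and, for every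
perfect matching `M` of `G`, there are Hamiltonian cycles `H 1, …, H (t-1)`, each
extending `M`, which together cover all the edges incident to `v` not in `M`. -/
def IsMalleable {V : Type} (G : SimpleGraph V) (v : V) (t : ℕ) : Prop :=
  2 ≤ t ∧ (G.neighborSet v).ncard = t ∧
    ∀ M, IsPerfectMatchingSet G M →
      ∃ H : Fin (t - 1) → Set (Sym2 V),
        (∀ i, IsHamiltonianCycleSet G (H i) ∧ M ⊆ H i) ∧
        G.incidenceSet v \ M ⊆ ⋃ i, H i

/-- The graph `Y_{2n+1}`: the complete graph on the `2n+1` nonzero vertices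
`v₁ = 1, …, v_{2n+1} = 2n+1` of `Fin (2n+2)`, together with the extra vertex
`v₀ = 0` adjacent exactly to `v₁`, `v₂` and `v₃`. -/
def Ygraph (n : ℕ) : SimpleGraph (Fin (2 * n + 1 + 1)) where
  Adj i j := i ≠ j ∧ (i = 0 → j.val ≤ 3) ∧ (j = 0 → i.val ≤ 3)
  symm := ⟨by rintro i j ⟨h1, h2, h3⟩; exact ⟨h1.symm, h3, h2⟩⟩
  loopless := ⟨by rintro i ⟨h1, -⟩; exact h1 rfl⟩

namespace Aux7
open Fin.NatCast
variable {V : Type} {G : SimpleGraph V}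

/-- edge list of the walk along `x :: l` finishing at `y`. -/
def pz (x : V) (l : List V) (y : V) : List (Sym2 V) :=
  List.zipWith (fun a b => s(a, b)) (x :: l) (l ++ [y])

@[simp] lemma pz_nil (x y : V) : pz x [] y = [s(x, y)] := rfl

@[simp] lemma pz_cons (x z y : V) (l : List V) :
    pz x (z :: l) y = s(x, z) :: pz z l y := rfl

lemma mem_pz_middle (u x y : V) (l₂ : List V) :
    ∀ (l₁ : List V) (w : V), s(x, y) ∈ pz w (l₁ ++ x :: y :: l₂) u := by
  intro l₁
  induction l₁ with
  | nil => intro w; simp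
  | cons c t ih => intro w; rw [List.cons_append, pz_cons]; exact List.mem_cons_of_mem _ (ih c)

lemma mem_pz_last (u x : V) :
    ∀ (l₁ : List V) (w : V), s(x, u) ∈ pz w (l₁ ++ [x]) u := by
  intro l₁
  induction l₁ with
  | nil => intro w; simp
  | cons c t ih => intro w; rw [List.cons_append, pz_cons]; exact List.mem_cons_of_mem _ (ih c)

lemma pz_mem_end (u : V) :
    ∀ (l : List V) (x : V), u ∉ x :: l → ∀ e ∈ pz x l u, u ∈ e →
      e = s((x :: l).getLast (List.cons_ne_nil _ _), u) := by
  intro l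
  induction l with
  | nil =>
    intro x hu e he hue
    simp only [pz_nil, List.mem_singleton] at he
    simpa using he
  | cons z t ih =>
    intro x hu e he hue
    rw [pz_cons] at he
    rcases List.mem_cons.mp he with h | h
    · exfalso
      subst h
      rcases Sym2.mem_iff.mp hue with h | h
      · exact hu (h ▸ List.mem_cons_self)
      · exact hu (h ▸ List.mem_cons_of_mem _ (List.mem_cons_self))
    · have hu' : u ∉ z :: t := fun hc => hu (List.mem_cons_of_mem _ hc)
      have := ih z hu' e h hue
      rw [this]
      congr 1

lemma exists_walk_pz :
    ∀ (l : List V) (x y : V), List.Chain G.Adj x (l ++ [y]) →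
      ∃ w : G.Walk x y, w.support = x :: (l ++ [y]) ∧ w.edges = pz x l y := by
  intro l
  induction l with
  | nil =>
    intro x y h
    rcases List.chain_cons.mp h with ⟨hadj, -⟩
    exact ⟨Walk.cons hadj Walk.nil, by simp, by simp [pz]⟩
  | cons z t ih =>
    intro x y h
    rw [List.cons_append] at h; unfold List.Chain at h; rw [List.chain_cons] at h
    obtain ⟨w, hs, he⟩ := ih z y h.2
    exact ⟨Walk.cons h.1 w, by simp [hs], by simp [he]⟩

lemma ham_of_list (u : V) (l : List V) (hchain : List.Chain G.Adj u (l ++ [u]))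
    (hnodup : (u :: l).Nodup) (hall : ∀ v, v ∈ u :: l) (hlen : 2 ≤ l.length) :
    IsHamiltonianCycleSet G {e | e ∈ pz u l u} := by
  cases l with
  | nil => simp at hlen
  | cons a l' =>
  rw [List.cons_append] at hchain; unfold List.Chain at hchain; rw [List.chain_cons] at hchain
  obtain ⟨p, hs, he⟩ := exists_walk_pz l' a u hchain.2
  have hl' : l' ≠ [] := by
    intro h; subst h; simp at hlen
  have hnd : (u :: a :: l').Nodup := hnodup
  simp only [List.nodup_cons, List.mem_cons, not_or] at hnd
  refine ⟨u, Walk.cons hchain.1 p, ?_, ?_, ?_⟩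
  · rw [Walk.cons_isCycle_iff]
    constructor
    · rw [Walk.isPath_def, hs]
      simp only [List.nodup_cons, List.mem_append, List.mem_singleton, not_or]
      refine ⟨⟨hnd.2.1, fun h => hnd.1.1 h.symm⟩, ?_⟩
      rw [List.nodup_append']
      exact ⟨hnd.2.2, List.nodup_singleton _, by
        intro z hz; simp only [List.mem_singleton]; intro h; exact hnd.1.2 (h ▸ hz)⟩
    · rw [he]
      intro hmem
      have hunotin : u ∉ a :: l' := by
        simp only [List.mem_cons, not_or]; exact ⟨fun h => hnd.1.1 h, hnd.1.2⟩
      have := pz_mem_end u l' a hunotin _ hmem (by simp)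
      have hua : u ≠ a := fun h => hnd.1.1 h
      have hlast : (a :: l').getLast (List.cons_ne_nil _ _) = a := by
        have h2 := Sym2.eq_iff.mp this
        rcases h2 with ⟨h3, h4⟩ | ⟨h3, h4⟩
        · exact (hua h4.symm).elim
        · exact h4.symm
      have : (a :: l').getLast (List.cons_ne_nil _ _) ∈ l' := by
        rw [List.getLast_cons hl']
        exact List.getLast_mem hl'
      rw [hlast] at this
      exact hnd.2.1 this
  · intro v
    rw [Walk.support_cons, hs]
    have := hall v
    simp only [List.mem_cons, List.mem_append, List.mem_singleton] at this ⊢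
    tauto
  · ext e
    simp only [Set.mem_setOf_eq, Walk.edges_cons, he, pz_cons, List.mem_cons]


variable {V : Type} {G : SimpleGraph V}

lemma path_start_nbr {x u : V} (q : G.Walk x u) (hq : q.IsPath) (hnil : ¬ q.Nil) :
    ∃ y, q.toSubgraph.neighborSet x = {y} ∧ s(x, y) ∈ q.edges := by
  cases q with
  | nil => simp at hnil
  | @cons _ z _ h r =>
    refine ⟨z, ?_, by simp⟩
    rw [Walk.cons_isPath_iff] at hq
    have hr : r.toSubgraph.neighborSet x = ∅ := by
      ext w
      simp only [Set.mem_empty_iff_false, iff_false, Subgraph.mem_neighborSet]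
      intro hw
      have : x ∈ r.toSubgraph.verts := hw.fst_mem
      rw [Walk.mem_verts_toSubgraph] at this
      exact hq.2 this
    show ((G.subgraphOfAdj h) ⊔ r.toSubgraph).neighborSet x = {z}
    rw [Subgraph.neighborSet_sup, hr, Set.union_empty, neighborSet_fst_subgraphOfAdj]

lemma cycle_nbr [DecidableEq V] {w : V} (c : G.Walk w w) (hc : c.IsCycle) (v : V)
    (hv : v ∈ c.support) :
    ∃ p q : V, p ≠ q ∧ c.toSubgraph.neighborSet v = {p, q} := by
  rw [← Walk.toSubgraph_rotate c hv]
  have hc' := hc.rotate hv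
  set d := c.rotate v hv with hd
  clear_value d
  cases d with
  | nil => exact absurd hc'.three_le_length (by simp)
  | @cons _ z _ h p =>
    rw [Walk.cons_isCycle_iff] at hc'
    have hvz : v ≠ z := h.ne
    have hpr : ¬ p.reverse.Nil := by
      rw [Walk.not_nil_iff_lt_length, Walk.length_reverse]
      exact Walk.not_nil_iff_lt_length.mp (Walk.not_nil_of_ne (Ne.symm hvz))
    obtain ⟨y, hy, hyedge⟩ := path_start_nbr p.reverse hc'.1.reverse hpr
    have hyp : s(v, y) ∈ p.edges := by
      rw [Walk.edges_reverse] at hyedge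
      exact (List.mem_reverse).mp hyedge
    have hzy : z ≠ y := by
      rintro rfl
      exact hc'.2 hyp
    refine ⟨z, y, hzy, ?_⟩
    show ((G.subgraphOfAdj h) ⊔ p.toSubgraph).neighborSet v = {z, y}
    rw [Subgraph.neighborSet_sup, neighborSet_fst_subgraphOfAdj]
    rw [← Walk.toSubgraph_reverse, hy]
    rfl


variable {n : ℕ}

section basic
variable (n : ℕ) (hn : 2 ≤ n)

abbrev VV (n : ℕ) := Fin (2 * n + 1 + 1)

lemma val0 : (0 : VV n).val = 0 := rfl

lemma val1 (hn : 2 ≤ n) : (1 : VV n).val = 1 := by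
  rw [Fin.coe_ofNat_eq_mod]; exact Nat.mod_eq_of_lt (by omega)

lemma val2 (hn : 2 ≤ n) : (2 : VV n).val = 2 := by
  rw [Fin.coe_ofNat_eq_mod]; exact Nat.mod_eq_of_lt (by omega)

lemma val3 (hn : 2 ≤ n) : (3 : VV n).val = 3 := by
  rw [Fin.coe_ofNat_eq_mod]; exact Nat.mod_eq_of_lt (by omega)

lemma yadj {x y : VV n} : (Ygraph n).Adj x y ↔
    (x ≠ y ∧ (x = 0 → y.val ≤ 3) ∧ (y = 0 → x.val ≤ 3)) := Iff.rfl

lemma char3 (hn : 2 ≤ n) (x : VV n) (h0 : x ≠ 0) (h3 : x.val ≤ 3) :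
    x = 1 ∨ x = 2 ∨ x = 3 := by
  have h0' : x.val ≠ 0 := fun h => h0 (Fin.ext (h.trans (val0 n).symm))
  have e1 := val1 n hn
  have e2 := val2 n hn
  have e3 := val3 n hn
  rcases Nat.lt_or_ge x.val 2 with h | h
  · left; exact Fin.ext (by omega)
  · rcases Nat.lt_or_ge x.val 3 with h' | h'
    · right; left; exact Fin.ext (by omega)
    · right; right; exact Fin.ext (by omega)
end basic

lemma no_ham (hn : 2 ≤ n) (x y : VV n) (hx : x.val = 2 ∨ x.val = 3)
    (hy : y.val = 2 ∨ y.val = 3) (hxy : x ≠ y) (H : Set (Sym2 (VV n)))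
    (hH : IsHamiltonianCycleSet (Ygraph n) H)
    (h01 : s((0 : VV n), 1) ∈ H) (hxyH : s(x, y) ∈ H) (h1y : s((1 : VV n), y) ∈ H) :
    False := by
  classical
  obtain ⟨w0, c, hcyc, hsupp, heq⟩ := hH
  subst heq
  simp only [Set.mem_setOf_eq] at h01 hxyH h1y
  set D := c.toSubgraph with hD
  have hadj : ∀ u v : VV n, s(u, v) ∈ c.edges → D.Adj u v := by
    intro u v h
    rw [← Subgraph.mem_edgeSet, hD, Walk.mem_edges_toSubgraph]
    exact h
  have nbr : ∀ v : VV n, ∃ p q : VV n, p ≠ q ∧ D.neighborSet v = {p, q} :=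
    fun v => cycle_nbr c hcyc v (hsupp v)
  have pair_eq : ∀ v a b : VV n, a ≠ b → D.Adj v a → D.Adj v b →
      D.neighborSet v = {a, b} := by
    intro v a b hab ha hb
    obtain ⟨p, q, hpq, hset⟩ := nbr v
    have ha' : a ∈ ({p, q} : Set (VV n)) := hset ▸ ha
    have hb' : b ∈ ({p, q} : Set (VV n)) := hset ▸ hb
    rw [hset]
    simp only [Set.mem_insert_iff, Set.mem_singleton_iff] at ha' hb'
    rcases ha' with rfl | rfl <;> rcases hb' with rfl | rfl
    · exact absurd rfl hab
    · rfl
    · exact Set.pair_comm _ _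
    · exact absurd rfl hab
  have e0 := val0 n
  have e1 := val1 n hn
  have h1x : (1 : VV n) ≠ x := fun h => by
    rw [Fin.ext_iff, e1] at h; omega
  have h1y' : (1 : VV n) ≠ y := fun h => by
    rw [Fin.ext_iff, e1] at h; omega
  have h0x : (0 : VV n) ≠ x := fun h => by
    rw [Fin.ext_iff, e0] at h; omega
  have h0y : (0 : VV n) ≠ y := fun h => by
    rw [Fin.ext_iff, e0] at h; omega
  have h01' : (0 : VV n) ≠ 1 := fun h => by
    rw [Fin.ext_iff, e0, e1] at h; omega
  have hNy : D.neighborSet y = {1, x} :=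
    pair_eq y 1 x h1x ((hadj _ _ h1y).symm) ((hadj _ _ hxyH).symm)
  have hyN0 : y ∉ D.neighborSet 0 := by
    intro hmem
    have : (0 : VV n) ∈ D.neighborSet y := (Subgraph.mem_neighborSet _ _ _).mpr
      ((Subgraph.mem_neighborSet _ _ _).mp hmem).symm
    rw [hNy] at this
    simp only [Set.mem_insert_iff, Set.mem_singleton_iff] at this
    rcases this with h | h
    exacts [h01' h, h0x h]
  have hxyv : x.val ≠ y.val := fun h => hxy (Fin.ext h)
  have hN0sub : D.neighborSet 0 ⊆ {1, x} := by
    intro z hz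
    have hGz : (Ygraph n).Adj 0 z := D.adj_sub hz
    rcases (yadj n).mp hGz with ⟨hz0, hz3, -⟩
    have hz3' : z.val ≤ 3 := hz3 rfl
    have hzy : z ≠ y := fun h => hyN0 (h ▸ hz)
    have hzyv : z.val ≠ y.val := fun h => hzy (Fin.ext h)
    have hz0v : z.val ≠ 0 := fun h => hz0 (Fin.ext (by rw [e0, h])).symm
    have : z.val = 1 ∨ z.val = x.val := by
      rcases hx with h | h <;> rcases hy with h' | h' <;> omega
    rcases this with h | h
    · exact Or.inl (Fin.ext (by rw [e1, h]))
    · exact Or.inr (Fin.ext h)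
  have hN0 : D.neighborSet 0 = {1, x} := by
    obtain ⟨p, q, hpq, hset⟩ := nbr 0
    refine Set.eq_of_subset_of_ncard_le hN0sub ?_ (Set.toFinite _)
    rw [hset, Set.ncard_pair hpq, Set.ncard_pair h1x]
  have hD0x : D.Adj 0 x := by
    have : x ∈ D.neighborSet 0 := by
      rw [hN0]; exact Set.mem_insert_of_mem _ rfl
    exact this
  have hD01 : D.Adj (0 : VV n) 1 := hadj _ _ h01
  have hNx : D.neighborSet x = {0, y} :=
    pair_eq x 0 y h0y hD0x.symm (hadj _ _ hxyH)
  have hN1 : D.neighborSet 1 = {0, y} :=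
    pair_eq 1 0 y h0y hD01.symm (hadj _ _ h1y)
  set S : Set (VV n) := {0, 1, x, y} with hS
  have hclosed : ∀ u z : VV n, u ∈ S → D.Adj u z → z ∈ S := by
    intro u z hu hadjz
    have hz : z ∈ D.neighborSet u := hadjz
    rcases hu with rfl | rfl | rfl | rfl
    · rw [hN0] at hz
      rcases hz with rfl | rfl
      · exact Or.inr (Or.inl rfl)
      · exact Or.inr (Or.inr (Or.inl rfl))
    · rw [hN1] at hz
      rcases hz with rfl | rfl
      · exact Or.inl rfl
      · exact Or.inr (Or.inr (Or.inr rfl))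
    · rw [hNx] at hz
      rcases hz with rfl | rfl
      · exact Or.inl rfl
      · exact Or.inr (Or.inr (Or.inr rfl))
    · rw [hNy] at hz
      rcases hz with rfl | rfl
      · exact Or.inr (Or.inl rfl)
      · exact Or.inr (Or.inr (Or.inl rfl))
  have hv4lt : 4 < 2 * n + 1 + 1 := by omega
  set v4 : VV n := ⟨4, hv4lt⟩ with hv4
  have e4 : v4.val = 4 := rfl
  have hv4S : v4 ∉ S := by
    intro hmem
    simp only [hS, Set.mem_insert_iff, Set.mem_singleton_iff] at hmem
    rcases hmem with h | h | h | h <;> rw [Fin.ext_iff, e4] at h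
    · rw [e0] at h; omega
    · rw [e1] at h; omega
    · omega
    · omega
  have hconn := c.toSubgraph_connected
  have h0v : (0 : VV n) ∈ D.verts := (Walk.mem_verts_toSubgraph c).mpr (hsupp _)
  have h4v : v4 ∈ D.verts := (Walk.mem_verts_toSubgraph c).mpr (hsupp _)
  obtain ⟨pw⟩ := hconn ⟨0, h0v⟩ ⟨v4, h4v⟩
  have trap : ∀ {s t : D.verts} (p : D.coe.Walk s t), (s : VV n) ∈ S → (t : VV n) ∈ S := by
    intro s t p
    induction p with
    | nil => exact id
    | cons h q ih =>
      intro hs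
      exact ih (hclosed _ _ hs h)
  exact hv4S (trap pw (Or.inl rfl))

def M0 (n : ℕ) : Set (Sym2 (VV n)) :=
  {e | ∃ k : ℕ, k ≤ n ∧ e = s(((2 * k : ℕ) : VV n), ((2 * k + 1 : ℕ) : VV n))}

lemma castval {m : ℕ} (h : m < 2 * n + 1 + 1) : ((m : VV n)).val = m := by
  rw [Fin.coe_natCast_eq_mod]; exact Nat.mod_eq_of_lt h

lemma M0_pm (hn : 2 ≤ n) :
    (M0 n ⊆ (Ygraph n).edgeSet) ∧ ∀ v : VV n, ∃! e, e ∈ M0 n ∧ v ∈ e := by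
  constructor
  · rintro e ⟨k, hk, rfl⟩
    have ha : ((2 * k : ℕ) : VV n).val = 2 * k := castval (by omega)
    have hb : ((2 * k + 1 : ℕ) : VV n).val = 2 * k + 1 := castval (by omega)
    rw [SimpleGraph.mem_edgeSet]
    refine ⟨fun h => by rw [Fin.ext_iff, ha, hb] at h; omega, ?_, ?_⟩
    · intro h
      have hk0 : 2 * k = 0 := by rw [Fin.ext_iff, ha] at h; exact h
      rw [hb]; omega
    · intro h
      exfalso
      rw [Fin.ext_iff, hb, val0 n] at h; omega
  · intro v
    set k := v.val / 2 with hkdef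
    have hvlt : v.val < 2 * n + 1 + 1 := v.isLt
    have hk : k ≤ n := by omega
    have ha : ((2 * k : ℕ) : VV n).val = 2 * k := castval (by omega)
    have hb : ((2 * k + 1 : ℕ) : VV n).val = 2 * k + 1 := castval (by omega)
    refine ⟨s(((2 * k : ℕ) : VV n), ((2 * k + 1 : ℕ) : VV n)), ⟨⟨k, hk, rfl⟩, ?_⟩, ?_⟩
    · rw [Sym2.mem_iff]
      rcases Nat.even_or_odd v.val with he | ho
      · left; rw [Fin.ext_iff, ha]; rcases he with ⟨m, hm⟩; omega
      · right; rw [Fin.ext_iff, hb]; rcases ho with ⟨m, hm⟩; omega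
    · rintro e' ⟨⟨j, hj, rfl⟩, hv⟩
      have ha' : ((2 * j : ℕ) : VV n).val = 2 * j := castval (by omega)
      have hb' : ((2 * j + 1 : ℕ) : VV n).val = 2 * j + 1 := castval (by omega)
      have hjk : j = k := by
        rw [Sym2.mem_iff] at hv
        rcases hv with h | h <;> rw [Fin.ext_iff] at h
        · rw [ha'] at h; omega
        · rw [hb'] at h; omega
      rw [hjk]

lemma M0_mem01 (hn : 2 ≤ n) : s((0 : VV n), 1) ∈ M0 n := by
  refine ⟨0, by omega, ?_⟩
  norm_num

lemma M0_mem23 (hn : 2 ≤ n) : s((2 : VV n), 3) ∈ M0 n := by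
  refine ⟨1, by omega, ?_⟩
  norm_num

lemma M0_not12 (hn : 2 ≤ n) : s((1 : VV n), 2) ∉ M0 n := by
  rintro ⟨k, hk, h⟩
  have ha : ((2 * k : ℕ) : VV n).val = 2 * k := castval (by omega)
  have hb : ((2 * k + 1 : ℕ) : VV n).val = 2 * k + 1 := castval (by omega)
  rcases Sym2.eq_iff.mp h with ⟨h1, h2⟩ | ⟨h1, h2⟩ <;>
    rw [Fin.ext_iff] at h1 h2
  · rw [ha, val1 n hn] at h1; omega
  · rw [hb, val1 n hn] at h1
    rw [ha, val2 n hn] at h2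
    omega

lemma M0_not13 (hn : 2 ≤ n) : s((1 : VV n), 3) ∉ M0 n := by
  rintro ⟨k, hk, h⟩
  have ha : ((2 * k : ℕ) : VV n).val = 2 * k := castval (by omega)
  have hb : ((2 * k + 1 : ℕ) : VV n).val = 2 * k + 1 := castval (by omega)
  rcases Sym2.eq_iff.mp h with ⟨h1, h2⟩ | ⟨h1, h2⟩ <;>
    rw [Fin.ext_iff] at h1 h2
  · rw [ha, val1 n hn] at h1; omega
  · rw [hb, val1 n hn] at h1
    rw [ha, val3 n hn] at h2
    omega

lemma matching_invol {M : Set (Sym2 (VV n))} (hM : IsPerfectMatchingSet (Ygraph n) M) :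
    ∃ f : VV n → VV n, (∀ v, f v ≠ v) ∧ (∀ v, f (f v) = v) ∧ (∀ v, s(v, f v) ∈ M) ∧
      ∀ v e, e ∈ M → v ∈ e → e = s(v, f v) := by
  classical
  choose e he hu using hM.2
  set f : VV n → VV n := fun v => Sym2.Mem.other (he v).2 with hf
  have hspec : ∀ v, s(v, f v) = e v := fun v => Sym2.other_spec (he v).2
  have hmem : ∀ v, s(v, f v) ∈ M := fun v => (hspec v) ▸ (he v).1
  have hne : ∀ v, f v ≠ v := by
    intro v h
    have hd := SimpleGraph.not_isDiag_of_mem_edgeSet (Ygraph n) (hM.1 (hmem v))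
    rw [Sym2.mk_isDiag_iff] at hd
    exact hd h.symm
  have huniq : ∀ v e', e' ∈ M → v ∈ e' → e' = s(v, f v) := by
    intro v e' h1 h2
    rw [hspec]
    exact hu v e' ⟨h1, h2⟩
  have hinv : ∀ v, f (f v) = v := by
    intro v
    have h1 : s(v, f v) = s(f v, f (f v)) :=
      huniq (f v) _ (hmem v) (Sym2.mem_mk_right _ _)
    rcases Sym2.eq_iff.mp h1 with ⟨h2, h3⟩ | ⟨h2, h3⟩
    · exact absurd h2.symm (hne v)
    · exact h2.symm
  exact ⟨f, hne, hinv, hmem, huniq⟩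

lemma chain_of_ne : ∀ (m : List (VV n)) (x : VV n), x ≠ 0 → (∀ v ∈ m, v ≠ 0) →
    List.Chain (· ≠ ·) x m → List.Chain (Ygraph n).Adj x m
  | [], _, _, _, _ => List.Chain.nil
  | y :: t, x, hx, hm, hc => by
    rcases List.chain_cons.mp hc with ⟨h1, h2⟩
    refine List.chain_cons.mpr ⟨⟨h1, fun h => absurd h hx, fun h =>
      absurd h (hm y (List.mem_cons_self))⟩, ?_⟩
    exact chain_of_ne t y (hm y (List.mem_cons_self))
      (fun v hv => hm v (List.mem_cons_of_mem _ hv)) h2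

lemma exists_ham_through (hn : 2 ≤ n) (M : Set (Sym2 (VV n)))
    (f : VV n → VV n) (hne : ∀ v, f v ≠ v) (hinv : ∀ v, f (f v) = v)
    (hmem : ∀ v, s(v, f v) ∈ M) (huniq : ∀ v e, e ∈ M → v ∈ e → e = s(v, f v))
    (hedge : M ⊆ (Ygraph n).edgeSet)
    (b : VV n) (hb0 : b ≠ 0) (hb3 : b.val ≤ 3) (hba : b ≠ f 0) :
    ∃ H, IsHamiltonianCycleSet (Ygraph n) H ∧ M ⊆ H ∧ s((0 : VV n), b) ∈ H := by
  classical
  have finj : ∀ u v : VV n, f u = f v → u = v := by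
    intro u v h
    rw [← hinv u, h, hinv]
  have ha0 : f 0 ≠ 0 := hne 0
  have hA0a : (Ygraph n).Adj 0 (f 0) := (SimpleGraph.mem_edgeSet _).mp (hedge (hmem 0))
  have hfb0 : f b ≠ 0 := by
    intro h
    have := congrArg f h
    rw [hinv] at this
    exact hba this
  have hfbb : f b ≠ b := hne b
  have hfba : f b ≠ f 0 := fun h => hb0 (finj b 0 h)
  have hafb : f 0 ≠ f b := fun h => hfba h.symm
  set reps : List (VV n) :=
    (Finset.univ.filter
      (fun v : VV n => v ≠ 0 ∧ v ≠ f 0 ∧ v ≠ b ∧ v ≠ f b ∧ v < f v)).toList with hreps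
  have hrep : ∀ x : VV n, x ∈ reps ↔
      (x ≠ 0 ∧ x ≠ f 0 ∧ x ≠ b ∧ x ≠ f b ∧ x < f x) := by
    intro x
    simp [hreps]
  have hrepnodup : reps.Nodup := Finset.nodup_toList _
  set F : List (VV n) := reps.flatMap (fun x => [x, f x]) with hF
  have hFmem : ∀ y : VV n, y ∈ F ↔ ∃ x ∈ reps, y = x ∨ y = f x := by
    intro y
    simp only [hF, List.mem_flatMap, List.mem_cons, List.not_mem_nil, or_false]
  have hFprop : ∀ y ∈ F, y ≠ 0 ∧ y ≠ f 0 ∧ y ≠ b ∧ y ≠ f b := by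
    intro y hy
    rcases (hFmem y).mp hy with ⟨x, hx, hxy⟩
    rcases (hrep x).mp hx with ⟨h1, h2, h3, h4, h5⟩
    rcases hxy with rfl | rfl
    · exact ⟨h1, h2, h3, h4⟩
    · refine ⟨?_, ?_, ?_, ?_⟩
      · intro h
        exact h2 (by rw [← hinv x, h])
      · intro h
        exact h1 (finj x 0 h)
      · intro h
        exact h4 (by rw [← hinv x, h])
      · intro h
        exact h3 (finj x b h)
  have hFnodup : F.Nodup := by
    rw [hF, List.nodup_flatMap]
    constructor
    · intro x hx
      refine List.nodup_cons.mpr ⟨?_, List.nodup_singleton _⟩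
      simp only [List.mem_cons, List.not_mem_nil, or_false]
      exact fun h => hne x h.symm
    · refine List.Pairwise.imp_of_mem ?_
        (List.Nodup.pairwise_of_forall_ne hrepnodup fun a ha b hb h => h)
      intro x y hx hy hxy
      rcases (hrep x).mp hx with ⟨-, -, -, -, h5⟩
      rcases (hrep y).mp hy with ⟨-, -, -, -, h5'⟩
      intro z hz1 hz2
      simp only [List.mem_cons, List.not_mem_nil, or_false] at hz1 hz2
      exfalso
      rcases hz1 with h1 | h1 <;> rcases hz2 with h2 | h2
      · exact hxy (h1.symm.trans h2)
      · have hxy' : x = f y := h1.symm.trans h2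
        rw [← hxy'] at h5'
        have e1 : f x = y := by rw [hxy', hinv]
        rw [e1] at h5
        exact absurd h5 (not_lt.mpr (le_of_lt h5'))
      · have hyx' : y = f x := h2.symm.trans h1
        rw [← hyx'] at h5
        have e1 : f y = x := by rw [hyx', hinv]
        rw [e1] at h5'
        exact absurd h5 (not_lt.mpr (le_of_lt h5'))
      · exact hxy (finj _ _ (h1.symm.trans h2))
  set g : VV n → List (VV n) := fun x => [x, f x] with hg
  set l : List (VV n) := f 0 :: (F ++ [f b, b]) with hl
  have hl0 : ∀ v ∈ l, v ≠ 0 := by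
    intro v hv
    rw [hl] at hv
    rcases List.mem_cons.mp hv with rfl | hv
    · exact ha0
    · rcases List.mem_append.mp hv with hv | hv
      · exact (hFprop v hv).1
      · rcases List.mem_cons.mp hv with rfl | hv
        · exact hfb0
        · rcases List.mem_cons.mp hv with rfl | hv
          · exact hb0
          · simp at hv
  have hnodup : ((0 : VV n) :: l).Nodup := by
    refine List.nodup_cons.mpr ⟨fun h => (hl0 0 h) rfl, ?_⟩
    rw [hl]
    refine List.nodup_cons.mpr ⟨?_, ?_⟩
    · intro h
      rcases List.mem_append.mp h with hv | hv
      · exact (hFprop _ hv).2.1 rfl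
      · rcases List.mem_cons.mp hv with h' | hv
        · exact hafb h'
        · rcases List.mem_cons.mp hv with h' | hv
          · exact hba h'.symm
          · simp at hv
    · rw [List.nodup_append']
      refine ⟨hFnodup, ?_, ?_⟩
      · refine List.nodup_cons.mpr ⟨?_, List.nodup_singleton _⟩
        simp only [List.mem_cons, List.not_mem_nil, or_false]
        exact hfbb
      · intro z hz hz2
        simp only [List.mem_cons, List.not_mem_nil, or_false] at hz2
        rcases hz2 with rfl | rfl
        · exact (hFprop _ hz).2.2.2 rfl
        · exact (hFprop _ hz).2.2.1 rfl
  have hall : ∀ v : VV n, v ∈ (0 : VV n) :: l := by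
    intro v
    by_cases hv0 : v = 0
    · exact hv0 ▸ List.mem_cons_self
    refine List.mem_cons_of_mem _ ?_
    rw [hl]
    by_cases hva : v = f 0
    · exact hva ▸ List.mem_cons_self
    refine List.mem_cons_of_mem _ ?_
    rw [List.mem_append]
    by_cases hvb : v = b
    · right; subst hvb; simp
    by_cases hvfb : v = f b
    · right; subst hvfb; simp
    left
    rcases lt_trichotomy v (f v) with hlt | heq | hgt
    · have hv : v ∈ reps := (hrep v).mpr ⟨hv0, hva, hvb, hvfb, hlt⟩
      exact (hFmem v).mpr ⟨v, hv, Or.inl rfl⟩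
    · exact absurd heq.symm (hne v)
    · have hfv : f v ∈ reps := by
        refine (hrep (f v)).mpr ⟨?_, ?_, ?_, ?_, ?_⟩
        · intro h; exact hva (by rw [← hinv v, h])
        · intro h; exact hv0 (finj v 0 h)
        · intro h; exact hvfb (by rw [← hinv v, h])
        · intro h; exact hvb (finj v b h)
        · rw [hinv]; exact hgt
      exact (hFmem v).mpr ⟨f v, hfv, Or.inr (by rw [hinv])⟩
  have hpl : l.Nodup := (List.nodup_cons.mp hnodup).2
  have hchain : List.Chain (Ygraph n).Adj 0 (l ++ [0]) := by
    have hshape : l ++ [0] = f 0 :: ((F ++ [f b]) ++ b :: [0]) := by simp [hl]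
    rw [hshape]
    refine List.chain_cons.mpr ⟨hA0a, ?_⟩
    rw [List.isChain_cons_split]
    constructor
    · have hC : List.Chain (· ≠ ·) (f 0) (F ++ [f b, b]) := by
        have hch := List.Pairwise.isChain hpl
        rw [hl] at hch
        exact hch
      have hshape2 : (F ++ [f b]) ++ [b] = F ++ [f b, b] := by simp
      rw [hshape2]
      refine chain_of_ne _ _ ha0 ?_ hC
      intro v hv
      exact hl0 v (by rw [hl]; exact List.mem_cons_of_mem _ hv)
    · exact List.chain_cons.mpr ⟨⟨hb0, fun h => absurd h hb0, fun _ => hb3⟩, List.Chain.nil⟩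
  have hlen : 2 ≤ l.length := by
    rw [hl]
    simp only [List.length_cons, List.length_append]
    omega
  have hham := ham_of_list (G := Ygraph n) 0 l hchain hnodup hall hlen
  refine ⟨{e | e ∈ pz (0 : VV n) l 0}, hham, ?_, ?_⟩
  · intro e he
    revert he
    induction e using Sym2.ind with
    | _ x y =>
    intro he
    have hexy : s(x, y) = s(x, f x) := huniq x _ he (Sym2.mem_mk_left _ _)
    rw [hexy]
    simp only [Set.mem_setOf_eq]
    by_cases hx0 : x = 0
    · subst hx0
      rw [hl, pz_cons]
      exact List.mem_cons_self
    by_cases hxa : x = f 0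
    · subst hxa
      rw [hinv, Sym2.eq_swap, hl, pz_cons]
      exact List.mem_cons_self
    by_cases hxb : x = b
    · rw [hxb, Sym2.eq_swap]
      have hsh : l = (f 0 :: F) ++ f b :: b :: [] := by simp [hl]
      rw [hsh]
      exact mem_pz_middle _ _ _ _ _ _
    by_cases hxfb : x = f b
    · rw [hxfb, hinv]
      have hsh : l = (f 0 :: F) ++ f b :: b :: [] := by simp [hl]
      rw [hsh]
      exact mem_pz_middle _ _ _ _ _ _
    rcases lt_trichotomy x (f x) with hlt | heq | hgt
    · have hxreps : x ∈ reps := (hrep x).mpr ⟨hx0, hxa, hxb, hxfb, hlt⟩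
      obtain ⟨s1, t1, hsplit⟩ := List.append_of_mem hxreps
      have hsh : l = (f 0 :: s1.flatMap g) ++ x :: f x :: (t1.flatMap g ++ [f b, b]) := by
        rw [hl, hF, hsplit]
        simp [List.flatMap_append, hg]
      rw [hsh]
      exact mem_pz_middle _ _ _ _ _ _
    · exact absurd heq.symm (hne x)
    · have hfxreps : f x ∈ reps := by
        refine (hrep (f x)).mpr ⟨?_, ?_, ?_, ?_, ?_⟩
        · intro h; exact hxa (by rw [← hinv x, h])
        · intro h; exact hx0 (finj x 0 h)
        · intro h; exact hxfb (by rw [← hinv x, h])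
        · intro h; exact hxb (finj x b h)
        · rw [hinv]; exact hgt
      obtain ⟨s1, t1, hsplit⟩ := List.append_of_mem hfxreps
      have hsh : l = (f 0 :: s1.flatMap g) ++ f x :: x :: (t1.flatMap g ++ [f b, b]) := by
        rw [hl, hF, hsplit]
        simp [List.flatMap_append, hg, hinv]
      rw [Sym2.eq_swap, hsh]
      exact mem_pz_middle _ _ _ _ _ _
  · have hsh : l = (f 0 :: F ++ [f b]) ++ [b] := by simp [hl]
    simp only [Set.mem_setOf_eq]
    rw [Sym2.eq_swap, hsh]
    exact mem_pz_last _ _ _ _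

lemma adj0 (z : VV n) (hz0 : z ≠ 0) (hz3 : z.val ≤ 3) : (Ygraph n).Adj 0 z :=
  ⟨fun h => hz0 h.symm, fun _ => hz3, fun h => absurd h hz0⟩

lemma nbr0 (hn : 2 ≤ n) : (Ygraph n).neighborSet 0 = {1, 2, 3} := by
  ext z
  simp only [SimpleGraph.mem_neighborSet, Set.mem_insert_iff, Set.mem_singleton_iff]
  constructor
  · intro h
    rcases (yadj n).mp h with ⟨h1, h2, -⟩
    exact char3 n hn z (fun hz => h1 hz.symm) (h2 rfl)
  · intro h
    rcases h with rfl | rfl | rfl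
    · exact adj0 _ (fun h => by rw [Fin.ext_iff, val1 n hn, val0 n] at h; omega)
        (by rw [val1 n hn]; omega)
    · exact adj0 _ (fun h => by rw [Fin.ext_iff, val2 n hn, val0 n] at h; omega)
        (by rw [val2 n hn]; omega)
    · exact adj0 _ (fun h => by rw [Fin.ext_iff, val3 n hn, val0 n] at h; omega)
        (by rw [val3 n hn])

lemma nbr0_ncard (hn : 2 ≤ n) : ((Ygraph n).neighborSet 0).ncard = 3 := by
  rw [nbr0 hn]
  refine Set.ncard_eq_three.mpr ⟨1, 2, 3, ?_, ?_, ?_, rfl⟩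
  · intro h; rw [Fin.ext_iff, val1 n hn, val2 n hn] at h; omega
  · intro h; rw [Fin.ext_iff, val1 n hn, val3 n hn] at h; omega
  · intro h; rw [Fin.ext_iff, val2 n hn, val3 n hn] at h; omega

lemma malleable0 (hn : 2 ≤ n) : IsMalleable (Ygraph n) 0 3 := by
  refine ⟨by omega, nbr0_ncard hn, ?_⟩
  intro M hM
  obtain ⟨f, hne, hinv, hmem, huniq⟩ := matching_invol hM
  have hA0a : (Ygraph n).Adj 0 (f 0) := (SimpleGraph.mem_edgeSet _).mp (hM.1 (hmem 0))
  have ha0 : f 0 ≠ 0 := hne 0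
  have ha3 : (f 0).val ≤ 3 := hA0a.2.1 rfl
  have main : ∀ b1 b2 : VV n, b1 ≠ 0 → b1.val ≤ 3 → b1 ≠ f 0 →
      b2 ≠ 0 → b2.val ≤ 3 → b2 ≠ f 0 →
      (∀ x : VV n, x ≠ 0 → x.val ≤ 3 → x ≠ f 0 → x = b1 ∨ x = b2) →
      ∃ H : Fin (3 - 1) → Set (Sym2 (VV n)),
        (∀ i, IsHamiltonianCycleSet (Ygraph n) (H i) ∧ M ⊆ H i) ∧
        (Ygraph n).incidenceSet 0 \ M ⊆ ⋃ i, H i := by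
    intro b1 b2 h10 h13 h1a h20 h23 h2a hcov
    obtain ⟨H1, hH1, hM1, hb1⟩ :=
      exists_ham_through hn M f hne hinv hmem huniq hM.1 b1 h10 h13 h1a
    obtain ⟨H2, hH2, hM2, hb2⟩ :=
      exists_ham_through hn M f hne hinv hmem huniq hM.1 b2 h20 h23 h2a
    refine ⟨fun i => if i = 0 then H1 else H2, ?_, ?_⟩
    · intro i
      by_cases h : i = 0 <;> simp [h]
      · exact ⟨hH1, hM1⟩
      · exact ⟨hH2, hM2⟩
    · intro e he
      obtain ⟨⟨heE, h0e⟩, heM⟩ := he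
      obtain ⟨z, hspec⟩ : ∃ z, s((0 : VV n), z) = e :=
        ⟨Sym2.Mem.other h0e, Sym2.other_spec h0e⟩
      subst hspec
      have hadj : (Ygraph n).Adj 0 z := (SimpleGraph.mem_edgeSet _).mp heE
      have hz0 : z ≠ 0 := fun hh => hadj.1 hh.symm
      have hz3 : z.val ≤ 3 := hadj.2.1 rfl
      have hza : z ≠ f 0 := fun h => heM (h ▸ hmem 0)
      rcases hcov z hz0 hz3 hza with rfl | rfl
      · exact Set.mem_iUnion.mpr ⟨0, by simpa using hb1⟩
      · refine Set.mem_iUnion.mpr ⟨1, ?_⟩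
        have : (1 : Fin (3 - 1)) ≠ 0 := by decide
        simpa [this] using hb2
  rcases char3 n hn (f 0) ha0 ha3 with h | h | h
  · refine main 2 3 ?_ (by rw [val2 n hn]; omega) ?_ ?_ (by rw [val3 n hn]) ?_ ?_
    · intro hh; rw [Fin.ext_iff, val2 n hn, val0 n] at hh; omega
    · intro hh; rw [h, Fin.ext_iff, val2 n hn, val1 n hn] at hh; omega
    · intro hh; rw [Fin.ext_iff, val3 n hn, val0 n] at hh; omega
    · intro hh; rw [h, Fin.ext_iff, val3 n hn, val1 n hn] at hh; omega
    · intro x hx0 hx3 hxa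
      rcases char3 n hn x hx0 hx3 with rfl | rfl | rfl
      · exact absurd h.symm hxa
      · exact Or.inl rfl
      · exact Or.inr rfl
  · refine main 1 3 ?_ (by rw [val1 n hn]; omega) ?_ ?_ (by rw [val3 n hn]) ?_ ?_
    · intro hh; rw [Fin.ext_iff, val1 n hn, val0 n] at hh; omega
    · intro hh; rw [h, Fin.ext_iff, val1 n hn, val2 n hn] at hh; omega
    · intro hh; rw [Fin.ext_iff, val3 n hn, val0 n] at hh; omega
    · intro hh; rw [h, Fin.ext_iff, val3 n hn, val2 n hn] at hh; omega
    · intro x hx0 hx3 hxa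
      rcases char3 n hn x hx0 hx3 with rfl | rfl | rfl
      · exact Or.inl rfl
      · exact absurd h.symm hxa
      · exact Or.inr rfl
  · refine main 1 2 ?_ (by rw [val1 n hn]; omega) ?_ ?_ (by rw [val2 n hn]; omega) ?_ ?_
    · intro hh; rw [Fin.ext_iff, val1 n hn, val0 n] at hh; omega
    · intro hh; rw [h, Fin.ext_iff, val1 n hn, val3 n hn] at hh; omega
    · intro hh; rw [Fin.ext_iff, val2 n hn, val0 n] at hh; omega
    · intro hh; rw [h, Fin.ext_iff, val2 n hn, val3 n hn] at hh; omega
    · intro x hx0 hx3 hxa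
      rcases char3 n hn x hx0 hx3 with rfl | rfl | rfl
      · exact Or.inl rfl
      · exact Or.inr rfl
      · exact absurd h.symm hxa

lemma nbr1_ncard (hn : 2 ≤ n) : ((Ygraph n).neighborSet 1).ncard = 2 * n + 1 := by
  have h10 : (1 : VV n) ≠ 0 := by
    intro h; rw [Fin.ext_iff, val1 n hn, val0 n] at h; omega
  have hset : (Ygraph n).neighborSet 1 = {(1 : VV n)}ᶜ := by
    ext z
    simp only [SimpleGraph.mem_neighborSet, Set.mem_compl_iff, Set.mem_singleton_iff]
    constructor
    · intro hadj hz
      exact hadj.1 hz.symm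
    · intro hz
      exact ⟨fun hh => hz hh.symm, fun hh => absurd hh h10,
        fun hh => by rw [val1 n hn]; omega⟩
  rw [hset, Set.compl_eq_univ_diff, Set.ncard_diff_singleton_of_mem (Set.mem_univ _),
    Set.ncard_univ, Nat.card_eq_fintype_card, Fintype.card_fin]
  omega

end Aux7

/-- For every `n ≥ 2`, the vertex `v₁` of `Y_{2n+1}` is not `(2n+1)`-malleable:
there is a perfect matching `M` containing `v₀v₁` and `v₂v₃` such that no Hamiltonian
cycle extending `M` contains `v₁v₂` or `v₁v₃`. Hence `Y_{2n+1}` admits a malleable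
vertex but not all of its vertices are malleable. -/
theorem stmt7 (n : ℕ) (hn : 2 ≤ n) :
    (∃ M, IsPerfectMatchingSet (Ygraph n) M ∧
      s((0 : Fin (2 * n + 1 + 1)), (1 : Fin (2 * n + 1 + 1))) ∈ M ∧
      s((2 : Fin (2 * n + 1 + 1)), (3 : Fin (2 * n + 1 + 1))) ∈ M ∧
      ∀ H, IsHamiltonianCycleSet (Ygraph n) H → M ⊆ H →
        s((1 : Fin (2 * n + 1 + 1)), (2 : Fin (2 * n + 1 + 1))) ∉ H ∧
        s((1 : Fin (2 * n + 1 + 1)), (3 : Fin (2 * n + 1 + 1))) ∉ H) ∧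
    ¬ IsMalleable (Ygraph n) 1 (2 * n + 1) ∧
    (∃ (v : Fin (2 * n + 1 + 1)) (t : ℕ), IsMalleable (Ygraph n) v t) ∧
    ¬ (∀ v : Fin (2 * n + 1 + 1), ∃ t : ℕ, IsMalleable (Ygraph n) v t) := by
  have pm : IsPerfectMatchingSet (Ygraph n) (Aux7.M0 n) := Aux7.M0_pm hn
  have ne32 : (3 : Aux7.VV n) ≠ 2 := by
    intro h; rw [Fin.ext_iff, Aux7.val3 n hn, Aux7.val2 n hn] at h; omega
  have ne23 : (2 : Aux7.VV n) ≠ 3 := fun h => ne32 h.symm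
  have claim : ∀ H, IsHamiltonianCycleSet (Ygraph n) H → Aux7.M0 n ⊆ H →
      s((1 : Fin (2 * n + 1 + 1)), (2 : Fin (2 * n + 1 + 1))) ∉ H ∧
      s((1 : Fin (2 * n + 1 + 1)), (3 : Fin (2 * n + 1 + 1))) ∉ H := by
    intro H hH hMH
    constructor
    · intro h12
      exact Aux7.no_ham hn 3 2 (Or.inr (Aux7.val3 n hn)) (Or.inl (Aux7.val2 n hn))
        ne32 H hH (hMH (Aux7.M0_mem01 hn))
        (by rw [Sym2.eq_swap]; exact hMH (Aux7.M0_mem23 hn)) h12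
    · intro h13
      exact Aux7.no_ham hn 2 3 (Or.inl (Aux7.val2 n hn)) (Or.inr (Aux7.val3 n hn))
        ne23 H hH (hMH (Aux7.M0_mem01 hn)) (hMH (Aux7.M0_mem23 hn)) h13
  have part2 : ¬ IsMalleable (Ygraph n) 1 (2 * n + 1) := by
    rintro ⟨-, -, hm⟩
    obtain ⟨H, hHs, hcov⟩ := hm (Aux7.M0 n) pm
    have ne12 : (1 : Aux7.VV n) ≠ 2 := by
      intro h; rw [Fin.ext_iff, Aux7.val1 n hn, Aux7.val2 n hn] at h; omega
    have ne10 : (1 : Aux7.VV n) ≠ 0 := by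
      intro h; rw [Fin.ext_iff, Aux7.val1 n hn, Aux7.val0 n] at h; omega
    have ne20 : (2 : Aux7.VV n) ≠ 0 := by
      intro h; rw [Fin.ext_iff, Aux7.val2 n hn, Aux7.val0 n] at h; omega
    have h12inc : s((1 : Aux7.VV n), 2) ∈ (Ygraph n).incidenceSet 1 \ Aux7.M0 n := by
      refine ⟨⟨?_, Sym2.mem_mk_left _ _⟩, Aux7.M0_not12 hn⟩
      rw [SimpleGraph.mem_edgeSet]
      exact ⟨ne12, fun h => absurd h ne10, fun h => absurd h ne20⟩
    obtain ⟨Hi, ⟨i, rfl⟩, hi⟩ := hcov h12inc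
    exact (claim (H i) (hHs i).1 (hHs i).2).1 hi
  refine ⟨⟨Aux7.M0 n, pm, Aux7.M0_mem01 hn, Aux7.M0_mem23 hn, claim⟩, part2,
    ⟨0, 3, Aux7.malleable0 hn⟩, ?_⟩
  intro hallv
  obtain ⟨t, ht⟩ := hallv 1
  have htval : t = 2 * n + 1 := by rw [← ht.2.1, Aux7.nbr1_ncard hn]
  exact part2 (htval ▸ ht)
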